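/- For all x ∈ ℝ, c ∈ (0, 1/162), ε ∈ (0,1), and s ∈ (−ε, ε), the pointwise inequality exp(−c(x+s)²) ≤ [(exp(−c(x+ε)²) − exp(−c(x−ε)²))/(2ε)]·s + [(exp(−c(x+ε)²) + exp(−c(x−ε)²))/2]·exp(cε²) holds. -/

import Mathlib

open Real

/-- Secant bound for the exponential: for `r ∈ [-1,1]`,
`exp (b*r) ≤ cosh b + r * sinh b`. -/
lemma sec_exp (b r : ℝ) (h1 : -1 ≤ r) (h2 : r ≤ 1) :
    Real.exp (b * r) ≤ Real.cosh b + r * Real.sinh b := by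
  have hc := convexOn_exp.2 (Set.mem_univ b) (Set.mem_univ (-b))
    (show (0:ℝ) ≤ (1 + r) / 2 by linarith) (show (0:ℝ) ≤ (1 - r) / 2 by linarith)
    (show (1 + r) / 2 + (1 - r) / 2 = 1 by ring)
  simp only [smul_eq_mul] at hc
  have he : (1 + r) / 2 * b + (1 - r) / 2 * (-b) = b * r := by ring
  rw [he] at hc
  rw [Real.cosh_eq, Real.sinh_eq]
  linarith

/-- Refined secant bound: for `b ≥ 0`, `r ∈ [0,1]`,
`exp (b*r) ≤ 1 + r sinh b + r² (cosh b - 1)`. -/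
lemma refined_sec (b r : ℝ) (hb : 0 ≤ b) (h0 : 0 ≤ r) (h1 : r ≤ 1) :
    Real.exp (b * r) ≤ 1 + r * Real.sinh b + r ^ 2 * (Real.cosh b - 1) := by
  set F : ℝ → ℝ := fun t => 1 + r * Real.sinh t + r ^ 2 * (Real.cosh t - 1)
    - Real.exp (t * r) with hF
  have hder : ∀ t : ℝ, HasDerivAt F
      (r * Real.cosh t + r ^ 2 * Real.sinh t - Real.exp (t * r) * r) t := by
    intro t
    have h1' : HasDerivAt (fun t : ℝ => Real.sinh t) (Real.cosh t) t := Real.hasDerivAt_sinh t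
    have h2' : HasDerivAt (fun t : ℝ => Real.cosh t - 1) (Real.sinh t) t :=
      (Real.hasDerivAt_cosh t).sub_const 1
    have h3' : HasDerivAt (fun t : ℝ => Real.exp (t * r)) (Real.exp (t * r) * r) t := by
      have := (Real.hasDerivAt_exp (t * r)).comp t ((hasDerivAt_id t).mul_const r)
      simpa [Function.comp_def] using this
    have h4' := (((h1'.const_mul r).add (h2'.const_mul (r ^ 2))).sub h3').const_add 1
    have hFG : F = fun t : ℝ => 1 + (r * Real.sinh t + r ^ 2 * (Real.cosh t - 1)
        - Real.exp (t * r)) := by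
      funext t; simp only [hF]; ring
    rw [hFG]
    exact h4'
  have hmono : MonotoneOn F (Set.Ici (0 : ℝ)) := by
    apply monotoneOn_of_deriv_nonneg (convex_Ici 0)
    · exact fun t _ => ((hder t).continuousAt).continuousWithinAt
    · exact fun t _ => ((hder t).differentiableAt).differentiableWithinAt
    · intro t _
      rw [(hder t).deriv]
      have hsec := sec_exp t r (by linarith) h1
      nlinarith [hsec, h0]
  have hbF := hmono Set.self_mem_Ici (Set.mem_Ici.mpr hb) hb
  have h0F : F 0 = 0 := by simp [hF]
  rw [h0F] at hbF
  simp only [hF] at hbF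
  linarith [hbF]

/-- Purely polynomial step used in the hard case of `key_aux`. -/
lemma arith_step (d u rS C X Y : ℝ) (hd0 : 0 < d) (hd : d ≤ 1 / 2)
    (hu0 : 0 ≤ u) (hu1 : u ≤ 1) (hC : 1 ≤ C) (hrS : 0 ≤ rS)
    (hX1 : X ≤ 1) (hX0 : 0 < X)
    (G2 : X - Y ≤ d * (1 - u)) (G3 : d * u * (1 - d) ≤ 1 - X)
    (G4 : 2 * rS * d ≤ d ^ 2 * u * (C + 1) + (C - 1)) :
    X * (1 + rS + u * (C - 1)) ≤ C + Y * rS := by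
  have h1u : (0:ℝ) ≤ 1 - u := by linarith
  have T1 : rS * (X - Y) ≤ rS * (d * (1 - u)) := mul_le_mul_of_nonneg_left G2 hrS
  have T2 : (1 - u) * (2 * rS * d) ≤ (1 - u) * (d ^ 2 * u * (C + 1) + (C - 1)) :=
    mul_le_mul_of_nonneg_left G4 h1u
  have hd2u : (0:ℝ) ≤ 1 - d ^ 2 * u := by nlinarith
  have T3 : (1 - u) * (d ^ 2 * u) * (C - 1) ≤ (C - 1) * (1 - u) := by
    nlinarith [mul_nonneg (mul_nonneg (show (0:ℝ) ≤ C - 1 by linarith) h1u) hd2u]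
  have h2d : (0:ℝ) ≤ 1 - 2 * d + d * u := by nlinarith
  have T4 : (1 - u) * (d ^ 2 * u) * 2 ≤ 2 * (d * u * (1 - d)) := by
    nlinarith [mul_nonneg (mul_nonneg hd0.le hu0) h2d]
  have hXu : u * X ≤ u := by nlinarith
  have T6 : (C - 1) * (1 - u) ≤ (C - 1) * (1 - u * X) := by
    nlinarith [mul_nonneg (show (0:ℝ) ≤ C - 1 by linarith) (show (0:ℝ) ≤ u - u * X by linarith)]
  nlinarith [T1, T2, T3, T4, G3, T6]

/-- Key inequality, case `b ≥ 0`. -/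
lemma key_aux (d b r : ℝ) (hd0 : 0 < d) (hd : d ≤ 1 / 2) (h1 : -1 ≤ r) (h2 : r ≤ 1)
    (hb : 0 ≤ b) :
    Real.exp (b * r - d * r ^ 2) ≤ Real.cosh b + Real.exp (-d) * r * Real.sinh b := by
  have hC : 1 ≤ Real.cosh b := Real.one_le_cosh b
  have hS : 0 ≤ Real.sinh b := Real.sinh_nonneg_iff.mpr hb
  rcases le_or_gt r 0 with hr | hr
  · -- easy case: r ≤ 0
    have e1 : Real.exp (b * r - d * r ^ 2) ≤ Real.exp (b * r) :=
      Real.exp_le_exp.mpr (by nlinarith [sq_nonneg r])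
    have e2 := sec_exp b r h1 h2
    have e3 : Real.exp (-d) ≤ 1 := by
      rw [show (1 : ℝ) = Real.exp 0 by simp]
      exact Real.exp_le_exp.mpr (by linarith)
    have e4 : 0 < Real.exp (-d) := Real.exp_pos _
    have e5 : r * Real.sinh b ≤ Real.exp (-d) * (r * Real.sinh b) := by
      nlinarith [mul_nonpos_of_nonpos_of_nonneg hr hS]
    calc Real.exp (b * r - d * r ^ 2) ≤ Real.exp (b * r) := e1
      _ ≤ Real.cosh b + r * Real.sinh b := e2
      _ ≤ Real.cosh b + Real.exp (-d) * r * Real.sinh b := by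
          rw [mul_assoc]; linarith
  · -- hard case: r > 0
    have hr' : 0 ≤ r := hr.le
    set u := r ^ 2 with hu
    have hu0 : 0 ≤ u := sq_nonneg r
    have hu1 : u ≤ 1 := by nlinarith
    set C := Real.cosh b with hCdef
    set S := Real.sinh b with hSdef
    set X := Real.exp (-(d * u)) with hX
    set Y := Real.exp (-d) with hY
    have hX0 : 0 < X := Real.exp_pos _
    have hY0 : 0 < Y := Real.exp_pos _
    have hX1 : X ≤ 1 := by
      rw [hX, show (1 : ℝ) = Real.exp 0 by simp]
      exact Real.exp_le_exp.mpr (by nlinarith)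
    have G1 : Y ≤ X := Real.exp_le_exp.mpr (by nlinarith)
    -- G2 : X - Y ≤ d * (1 - u)
    have P4 : 1 - d * (1 - u) ≤ Real.exp (-(d * (1 - u))) := by
      have := Real.add_one_le_exp (-(d * (1 - u))); linarith
    have P5 : X * Real.exp (-(d * (1 - u))) = Y := by
      rw [hX, hY, ← Real.exp_add]; ring_nf
    have hE0 : 0 < Real.exp (-(d * (1 - u))) := Real.exp_pos _
    have G2 : X - Y ≤ d * (1 - u) := by
      have h7 : X * (1 - d * (1 - u)) ≤ Y := by
        rw [← P5]; exact mul_le_mul_of_nonneg_left P4 hX0.le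
      nlinarith
    -- G3 : d * u * (1 - d) ≤ 1 - X
    have P6 : Real.exp (d * u) * X = 1 := by
      rw [hX, ← Real.exp_add]
      simp
    have P7 : 1 + d * u ≤ Real.exp (d * u) := by
      have := Real.add_one_le_exp (d * u); linarith
    have hXlow : 1 - d * u ≤ X := by
      have := Real.add_one_le_exp (-(d * u)); linarith
    have G3 : d * u * (1 - d) ≤ 1 - X := by
      have h8 : (1 + d * u) * X ≤ 1 := by
        calc (1 + d * u) * X ≤ Real.exp (d * u) * X :=
              mul_le_mul_of_nonneg_right P7 hX0.le
          _ = 1 := P6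
      nlinarith
    -- G4 : AM-GM  2*(r*S)*d ≤ d^2*u*(C+1) + (C-1)
    have hpyth : C ^ 2 - S ^ 2 = 1 := Real.cosh_sq_sub_sinh_sq b
    have hC1 : (0:ℝ) < C + 1 := by linarith
    have G4 : 2 * (r * S) * d ≤ d ^ 2 * u * (C + 1) + (C - 1) := by
      have hsq := sq_nonneg (r * d * (C + 1) - S)
      have expand : (r * d * (C + 1) - S)^2
          = (C + 1) * (d ^ 2 * u * (C + 1) + (C - 1) - 2 * (r * S) * d) := by
        rw [hu]; linear_combination (-1 : ℝ) * hpyth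
      have hM : 0 ≤ ((C + 1) * (d ^ 2 * u * (C + 1) + (C - 1) - 2 * (r * S) * d)) / (C + 1) :=
        div_nonneg (expand ▸ hsq) hC1.le
      rw [mul_div_cancel_left₀ _ hC1.ne'] at hM
      linarith
    have hrS : 0 ≤ r * S := mul_nonneg hr' hS
    have hL := refined_sec b r hb hr' h2
    have split : Real.exp (b * r - d * u) = X * Real.exp (b * r) := by
      rw [hX, ← Real.exp_add]; ring_nf
    have hstep : X * (1 + r * S + u * (C - 1)) ≤ C + Y * (r * S) :=
      arith_step d u (r * S) C X Y hd0 hd hu0 hu1 hC hrS hX1 hX0 G2 G3 G4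
    calc Real.exp (b * r - d * u) = X * Real.exp (b * r) := split
      _ ≤ X * (1 + r * S + u * (C - 1)) := by
          apply mul_le_mul_of_nonneg_left _ hX0.le
          simpa [hu] using hL
      _ ≤ C + Y * (r * S) := hstep
      _ = C + Y * r * S := by ring

/-- Key inequality: for `0 < d ≤ 1/2` and `r ∈ [-1,1]`,
`exp (b*r - d*r²) ≤ cosh b + exp (-d) * r * sinh b`. -/
lemma key_ineq (d b r : ℝ) (hd0 : 0 < d) (hd : d ≤ 1 / 2) (h1 : -1 ≤ r) (h2 : r ≤ 1) :
    Real.exp (b * r - d * r ^ 2) ≤ Real.cosh b + Real.exp (-d) * r * Real.sinh b := by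
  rcases le_or_gt 0 b with hb | hb
  · exact key_aux d b r hd0 hd h1 h2 hb
  · have hb' : (0:ℝ) ≤ -b := by linarith
    have h := key_aux d (-b) (-r) hd0 hd (by linarith) (by linarith) hb'
    have he : -b * -r - d * (-r) ^ 2 = b * r - d * r ^ 2 := by ring
    rw [he, Real.cosh_neg, Real.sinh_neg] at h
    calc Real.exp (b * r - d * r ^ 2)
        ≤ Real.cosh b + Real.exp (-d) * (-r) * -Real.sinh b := h
      _ = Real.cosh b + Real.exp (-d) * r * Real.sinh b := by ring

/-- The Gaussian-type function `s ↦ exp(−c(x+s)²)` lies below the secant line through its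
values at `s = ±ε`, lifted by the factor `exp(c ε²)`, for `c < 1/162`. -/
theorem stmt3 (x c ε s : ℝ) (hc : c ∈ Set.Ioo (0 : ℝ) (1 / 162))
    (hε : ε ∈ Set.Ioo (0 : ℝ) 1) (hs : s ∈ Set.Ioo (-ε) ε) :
    Real.exp (-c * (x + s) ^ 2) ≤
      (Real.exp (-c * (x + ε) ^ 2) - Real.exp (-c * (x - ε) ^ 2)) / (2 * ε) * s +
        (Real.exp (-c * (x + ε) ^ 2) + Real.exp (-c * (x - ε) ^ 2)) / 2 *
          Real.exp (c * ε ^ 2) := by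
  obtain ⟨hc0, hc1⟩ := hc
  obtain ⟨hε0, hε1⟩ := hε
  obtain ⟨hs0, hs1⟩ := hs
  have hεne : ε ≠ 0 := ne_of_gt hε0
  have hd0 : 0 < c * ε ^ 2 := by positivity
  have hdle : c * ε ^ 2 ≤ 1 / 2 := by nlinarith
  have hr1 : s / ε ≤ 1 := (div_le_one hε0).mpr hs1.le
  have hr0 : -1 ≤ s / ε := by
    rw [le_div_iff₀ hε0]
    linarith
  have key := key_ineq (c * ε ^ 2) (-(2 * c * x * ε)) (s / ε) hd0 hdle hr0 hr1
  -- rewrite the left-hand side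
  have hLHS : Real.exp (-c * (x + s) ^ 2) =
      Real.exp (-(c * x ^ 2)) *
        Real.exp (-(2 * c * x * ε) * (s / ε) - c * ε ^ 2 * (s / ε) ^ 2) := by
    rw [← Real.exp_add]
    congr 1
    field_simp
    ring
  -- useful exponential identities
  have hEp : Real.exp (-c * (x + ε) ^ 2) =
      Real.exp (-(c * x ^ 2)) * (Real.exp (2 * c * x * ε))⁻¹ * (Real.exp (c * ε ^ 2))⁻¹ := by
    rw [← Real.exp_neg, ← Real.exp_neg, ← Real.exp_add, ← Real.exp_add]
    congr 1
    ring
  have hEm : Real.exp (-c * (x - ε) ^ 2) =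
      Real.exp (-(c * x ^ 2)) * Real.exp (2 * c * x * ε) * (Real.exp (c * ε ^ 2))⁻¹ := by
    rw [← Real.exp_neg, ← Real.exp_add, ← Real.exp_add]
    congr 1
    ring
  have hcosh : Real.cosh (-(2 * c * x * ε)) =
      ((Real.exp (2 * c * x * ε))⁻¹ + Real.exp (2 * c * x * ε)) / 2 := by
    rw [Real.cosh_eq, ← Real.exp_neg]
    ring_nf
  have hsinh : Real.sinh (-(2 * c * x * ε)) =
      ((Real.exp (2 * c * x * ε))⁻¹ - Real.exp (2 * c * x * ε)) / 2 := by
    rw [Real.sinh_eq, ← Real.exp_neg]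
    ring_nf
  have hexpd : Real.exp (-(c * ε ^ 2)) = (Real.exp (c * ε ^ 2))⁻¹ := by
    rw [Real.exp_neg]
  have hRHS : (Real.exp (-c * (x + ε) ^ 2) - Real.exp (-c * (x - ε) ^ 2)) / (2 * ε) * s +
        (Real.exp (-c * (x + ε) ^ 2) + Real.exp (-c * (x - ε) ^ 2)) / 2 *
          Real.exp (c * ε ^ 2) =
      Real.exp (-(c * x ^ 2)) * (Real.cosh (-(2 * c * x * ε)) +
        Real.exp (-(c * ε ^ 2)) * (s / ε) * Real.sinh (-(2 * c * x * ε))) := by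
    rw [hEp, hEm, hcosh, hsinh, hexpd]
    have h1 : Real.exp (2 * c * x * ε) ≠ 0 := Real.exp_ne_zero _
    have h2 : Real.exp (c * ε ^ 2) ≠ 0 := Real.exp_ne_zero _
    field_simp
    ring
  rw [hLHS, hRHS]
  exact mul_le_mul_of_nonneg_left key (Real.exp_pos _).le
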